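/- arXiv:math/9803096 — 2 statements merged into one kernel-verified Lean document; each statement's English description precedes it below -/
import Mathlib

section
/- Let p, q be integers with 0 < p < q and gcd(p,q) = 1. Then there exists a unique integer p′ with 0 ≤ p′ < q and p·p′ ≡ 1 (mod q). Moreover (Voronoi's formula) p′ ≡ 3 − 2p + 6·∑_{j=1}^{p−1} ⌊jq/p⌋² (mod q). -/
private lemma icc_insert (n : ℤ) (hn : 1 ≤ n) :
    Finset.Icc (1:ℤ) n = insert n (Finset.Icc 1 (n-1)) := by
  ext x; simp only [Finset.mem_Icc, Finset.mem_insert]; omega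

private lemma sum_sq_aux : ∀ n : ℤ, 1 ≤ n →
    6 * ∑ j ∈ Finset.Icc (1:ℤ) (n-1), j^2 = (n-1)*n*(2*n-1) := by
  intro n hn
  refine Int.le_induction (motive := fun n _ => 6 * ∑ j ∈ Finset.Icc (1:ℤ) (n-1), j^2 = (n-1)*n*(2*n-1)) ?_ ?_ n hn
  · norm_num
  · intro n hn ih
    rw [show n+1-1 = n by ring, icc_insert n hn,
      Finset.sum_insert (by simp), mul_add, ih]
    ring

private lemma perm_sum (p q : ℤ) (hp : 0 < p) (hcop : IsCoprime q p) :
    ∑ j ∈ Finset.Icc (1:ℤ) (p-1), ((j*q) % p)^2 = ∑ j ∈ Finset.Icc (1:ℤ) (p-1), j^2 := by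
  obtain ⟨u, v, huv⟩ := hcop
  have hqu : q * u ≡ 1 [ZMOD p] := (Int.modEq_iff_dvd.mpr ⟨v, by linarith⟩)
  have hmem : ∀ j ∈ Finset.Icc (1:ℤ) (p-1), 0 ≤ j ∧ j < p := by
    intro j hj; simp only [Finset.mem_Icc] at hj; omega
  have key : ∀ j ∈ Finset.Icc (1:ℤ) (p-1), (j*q) % p ∈ Finset.Icc (1:ℤ) (p-1) := by
    intro j hj
    simp only [Finset.mem_Icc] at hj ⊢
    have h0 : 0 ≤ (j*q) % p := Int.emod_nonneg _ hp.ne'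
    have h1 : (j*q) % p < p := Int.emod_lt_of_pos _ hp
    have hne : (j*q) % p ≠ 0 := by
      intro h
      have hd : (p:ℤ) ∣ j * q := Int.dvd_of_emod_eq_zero h
      have hcu : IsCoprime p q := ⟨v, u, by linarith⟩
      have : (p:ℤ) ∣ j := hcu.dvd_of_dvd_mul_right hd
      have := Int.le_of_dvd (by omega) this
      omega
    omega
  have key' : ∀ j ∈ Finset.Icc (1:ℤ) (p-1), (j*u) % p ∈ Finset.Icc (1:ℤ) (p-1) := by
    intro j hj
    simp only [Finset.mem_Icc] at hj ⊢
    have h0 : 0 ≤ (j*u) % p := Int.emod_nonneg _ hp.ne'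
    have h1 : (j*u) % p < p := Int.emod_lt_of_pos _ hp
    have hne : (j*u) % p ≠ 0 := by
      intro h
      have hd : (p:ℤ) ∣ j * u := Int.dvd_of_emod_eq_zero h
      have hcu : IsCoprime p u := ⟨v, q, by linarith⟩
      have : (p:ℤ) ∣ j := hcu.dvd_of_dvd_mul_right hd
      have := Int.le_of_dvd (by omega) this
      omega
    omega
  refine Finset.sum_nbij' (fun j => (j*q) % p) (fun j => (j*u) % p) key key' ?_ ?_ ?_
  · intro j hj
    have c2 : ((j*q) % p) * u ≡ j [ZMOD p] := by
      calc ((j*q) % p) * u ≡ (j*q) * u [ZMOD p] := (Int.mod_modEq (j*q) p).mul_right u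
        _ = j * (q*u) := by ring
        _ ≡ j * 1 [ZMOD p] := Int.ModEq.mul_left j hqu
        _ = j := by ring
    have : (((j*q) % p) * u) % p = j % p := c2
    simpa [Int.emod_eq_of_lt (hmem j hj).1 (hmem j hj).2] using this
  · intro j hj
    have c2 : ((j*u) % p) * q ≡ j [ZMOD p] := by
      calc ((j*u) % p) * q ≡ (j*u) * q [ZMOD p] := (Int.mod_modEq (j*u) p).mul_right q
        _ = j * (q*u) := by ring
        _ ≡ j * 1 [ZMOD p] := Int.ModEq.mul_left j hqu
        _ = j := by ring
    have : (((j*u) % p) * q) % p = j % p := c2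
    simpa [Int.emod_eq_of_lt (hmem j hj).1 (hmem j hj).2] using this
  · intro j hj; rfl

theorem stmt_10 (p q : ℤ) (hp : 0 < p) (hpq : p < q) (hcop : Int.gcd p q = 1) :
    (∃! p' : ℤ, 0 ≤ p' ∧ p' < q ∧ p * p' ≡ 1 [ZMOD q]) ∧
    (∀ p' : ℤ, 0 ≤ p' → p' < q → p * p' ≡ 1 [ZMOD q] →
      p' ≡ 3 - 2 * p + 6 * ∑ j ∈ Finset.Icc (1 : ℤ) (p - 1), (j * q / p) ^ 2 [ZMOD q]) := by
  have hq : 0 < q := lt_trans hp hpq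
  have hco : IsCoprime p q := Int.isCoprime_iff_gcd_eq_one.mpr hcop
  obtain ⟨a, b, hab⟩ := hco
  have hco' : IsCoprime p q := ⟨a, b, hab⟩
  constructor
  · have ha : p * (a % q) ≡ 1 [ZMOD q] := by
      calc p * (a % q) ≡ p * a [ZMOD q] := Int.ModEq.mul_left p (Int.mod_modEq a q)
        _ ≡ 1 [ZMOD q] := Int.modEq_iff_dvd.mpr ⟨b, by linarith⟩
    refine ⟨a % q, ⟨Int.emod_nonneg _ hq.ne', Int.emod_lt_of_pos _ hq, ha⟩, ?_⟩
    rintro y ⟨hy0, hyq, hy⟩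
    have hyy : p * y ≡ p * (a % q) [ZMOD q] := hy.trans ha.symm
    have hd : q ∣ p * (a % q - y) := by
      have := Int.ModEq.dvd hyy
      simpa [mul_sub] using this
    have hdvd : q ∣ (a % q - y) := (hco'.symm).dvd_of_dvd_mul_left hd
    have h0 : 0 ≤ a % q := Int.emod_nonneg _ hq.ne'
    have h1 : a % q < q := Int.emod_lt_of_pos _ hq
    obtain ⟨c, hc⟩ := hdvd
    have hc0 : c = 0 := by nlinarith
    rw [hc0, mul_zero] at hc
    omega
  · intro p' hp'0 hp'q hpp'
    set n : ℕ := q.toNat with hn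
    have hnq : (n : ℤ) = q := Int.toNat_of_nonneg hq.le
    have hiff : ∀ x y : ℤ, ((x : ZMod n) = (y : ZMod n)) ↔ x ≡ y [ZMOD q] := by
      intro x y
      rw [ZMod.intCast_eq_intCast_iff', hnq]
      exact Iff.rfl
    have hq0 : ((q : ℤ) : ZMod n) = 0 := by
      rw [← hnq]; push_cast; exact ZMod.natCast_self n
    have h1 : ((p : ℤ) : ZMod n) * ((p' : ℤ) : ZMod n) = 1 := by
      have := (hiff (p * p') 1).mpr hpp'
      push_cast at this
      exact this
    set P : ZMod n := ((p : ℤ) : ZMod n) with hP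
    set P' : ZMod n := ((p' : ℤ) : ZMod n) with hP'
    have key : ∀ j : ℤ, P * ((j * q / p : ℤ) : ZMod n) = -(((j*q) % p : ℤ) : ZMod n) := by
      intro j
      have hid : p * (j * q / p) = j * q - (j*q) % p := by
        rw [Int.emod_def]; ring
      have hcast : ((p * (j * q / p) : ℤ) : ZMod n) = ((j * q - (j*q) % p : ℤ) : ZMod n) := by
        rw [hid]
      push_cast at hcast
      rw [hq0] at hcast
      rw [hP]
      rw [hcast]
      ring
    set T : ZMod n := ∑ j ∈ Finset.Icc (1:ℤ) (p-1), ((j * q / p : ℤ) : ZMod n)^2 with hT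
    have hsum : P^2 * T = ((∑ j ∈ Finset.Icc (1:ℤ) (p-1), j^2 : ℤ) : ZMod n) := by
      rw [hT, Finset.mul_sum,
        ← perm_sum p q hp (Int.isCoprime_iff_gcd_eq_one.mpr hcop).symm]
      push_cast
      refine Finset.sum_congr rfl ?_
      intro j hj
      calc P^2 * ((j * q / p : ℤ) : ZMod n)^2 = (P * ((j * q / p : ℤ) : ZMod n))^2 := by ring
        _ = (-(((j*q) % p : ℤ) : ZMod n))^2 := by rw [key j]
        _ = (((j*q) % p : ℤ) : ZMod n)^2 := by ring
    have h6 : P^2 * (6 * T) = (P - 1) * P * (2*P - 1) := by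
      have hz : ((6 * ∑ j ∈ Finset.Icc (1:ℤ) (p-1), j^2 : ℤ) : ZMod n)
          = (((p-1)*p*(2*p-1) : ℤ) : ZMod n) := by
        rw [sum_sq_aux p hp]
      calc P^2 * (6 * T) = 6 * (P^2 * T) := by ring
        _ = 6 * ((∑ j ∈ Finset.Icc (1:ℤ) (p-1), j^2 : ℤ) : ZMod n) := by rw [hsum]
        _ = ((6 * ∑ j ∈ Finset.Icc (1:ℤ) (p-1), j^2 : ℤ) : ZMod n) := by push_cast; ring
        _ = (((p-1)*p*(2*p-1) : ℤ) : ZMod n) := hz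
        _ = (P - 1) * P * (2*P - 1) := by rw [hP]; push_cast; ring
    have h6' : 6 * T = P'^2 * ((P-1)*P*(2*P-1)) := by
      linear_combination P'^2 * h6 - 6*T*(P*P'+1) * h1
    have goal : P' = 3 - 2*P + 6*T := by
      linear_combination -h6' - (P'*(2*P^2-3*P+1)+2*P-3) * h1
    refine (hiff _ _).mp ?_
    push_cast
    exact goal
end

section
/- Let u, v ∈ ℤ² be such that the triangle T = conv{0, u, v} is two-dimensional and contains no lattice points other than its three vertices (i.e., T ∩ ℤ² = {0, u, v}). Then {u, v} is a ℤ-basis of ℤ², i.e., |det(u,v)| = 1. -/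
private lemma combo_mem_aux {x y z : Fin 2 → ℝ} {a b c : ℝ} (ha : 0 ≤ a) (hb : 0 ≤ b)
    (hc : 0 ≤ c) (habc : a + b + c = 1) :
    a • x + b • y + c • z ∈ convexHull ℝ ({x, y, z} : Set (Fin 2 → ℝ)) := by
  have h := Finset.centerMass_mem_convexHull (Finset.univ : Finset (Fin 3))
    (w := ![a,b,c]) (z := ![x,y,z]) (s := {x, y, z}) ?_ ?_ ?_
  · simpa [Finset.centerMass, Fin.sum_univ_three, habc] using h
  · intro i _; fin_cases i <;> assumption
  · simp [Fin.sum_univ_three, habc]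
  · intro i _; fin_cases i <;> simp

private lemma lin_indep_aux (u v : Fin 2 → ℤ)
    (hdet : (u 0 : ℝ) * v 1 - (u 1 : ℝ) * v 0 ≠ 0)
    (a b : ℝ) (h : ∀ i : Fin 2, a * (u i : ℝ) + b * (v i : ℝ) = 0) : a = 0 ∧ b = 0 := by
  have h0 := h 0
  have h1 := h 1
  have hA : a * ((u 0 : ℝ) * v 1 - (u 1 : ℝ) * v 0) = 0 := by
    linear_combination (v 1 : ℝ) * h0 - (v 0 : ℝ) * h1
  have hB : b * ((u 0 : ℝ) * v 1 - (u 1 : ℝ) * v 0) = 0 := by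
    linear_combination (u 0 : ℝ) * h1 - (u 1 : ℝ) * h0
  exact ⟨(mul_eq_zero.mp hA).resolve_right hdet, (mul_eq_zero.mp hB).resolve_right hdet⟩

private lemma key_aux (u v : Fin 2 → ℤ)
    (hdet : (u 0 : ℝ) * v 1 - (u 1 : ℝ) * v 0 ≠ 0)
    (hT : convexHull ℝ ({0, (fun i => (u i : ℝ)), (fun i => (v i : ℝ))} : Set (Fin 2 → ℝ)) ∩
        {x : Fin 2 → ℝ | ∀ i, ∃ m : ℤ, x i = (m : ℝ)}
        = {0, (fun i => (u i : ℝ)), (fun i => (v i : ℝ))})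
    (z : Fin 2 → ℤ) (s t : ℝ)
    (hz : ∀ i, s * (u i : ℝ) + t * (v i : ℝ) = (z i : ℝ))
    (hst : ¬((∃ a : ℤ, s = (a : ℝ)) ∧ (∃ b : ℤ, t = (b : ℝ)))) : False := by
  set u' : Fin 2 → ℝ := fun i => (u i : ℝ) with hu'
  set v' : Fin 2 → ℝ := fun i => (v i : ℝ) with hv'
  set σ := Int.fract s with hσ
  set τ := Int.fract t with hτ
  have hσ0 : 0 ≤ σ := Int.fract_nonneg s
  have hσ1 : σ < 1 := Int.fract_lt_one s
  have hτ0 : 0 ≤ τ := Int.fract_nonneg t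
  have hτ1 : τ < 1 := Int.fract_lt_one t
  have hnz : ¬(σ = 0 ∧ τ = 0) := by
    rintro ⟨h1, h2⟩
    refine hst ⟨⟨⌊s⌋, ?_⟩, ⟨⌊t⌋, ?_⟩⟩
    · have : s - (⌊s⌋ : ℝ) = 0 := h1
      linarith
    · have : t - (⌊t⌋ : ℝ) = 0 := h2
      linarith
  set w : Fin 2 → ℤ := fun i => z i - ⌊s⌋ * u i - ⌊t⌋ * v i with hwdef
  set w' : Fin 2 → ℝ := fun i => (w i : ℝ) with hw'def
  have hw : ∀ i, w' i = σ * u' i + τ * v' i := by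
    intro i
    simp only [hw'def, hwdef, hσ, hτ, Int.fract, hu', hv']
    push_cast
    linear_combination -hz i
  rcases le_or_gt (σ + τ) 1 with hle | hgt
  · have hmem : w' ∈ ({0, u', v'} : Set (Fin 2 → ℝ)) := by
      rw [← hT]
      refine ⟨?_, fun i => ⟨w i, rfl⟩⟩
      have heq : w' = (1 - σ - τ) • (0 : Fin 2 → ℝ) + σ • u' + τ • v' := by
        funext i
        simp [hw i]
      rw [heq]
      exact combo_mem_aux (by linarith) hσ0 hτ0 (by ring)
    simp only [Set.mem_insert_iff, Set.mem_singleton_iff] at hmem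
    rcases hmem with h0 | h0 | h0
    · have := lin_indep_aux u v hdet σ τ (fun i => by
        have := congrFun h0 i
        rw [hw i] at this
        simpa using this)
      exact hnz this
    · have := lin_indep_aux u v hdet (σ - 1) τ (fun i => by
        have := congrFun h0 i
        rw [hw i] at this
        simp only [hu'] at this ⊢
        linarith [this])
      linarith [this.1]
    · have := lin_indep_aux u v hdet σ (τ - 1) (fun i => by
        have := congrFun h0 i
        rw [hw i] at this
        simp only [hv'] at this ⊢
        linarith [this])
      linarith [this.2]
  · set w2 : Fin 2 → ℤ := fun i => u i + v i - w i with hw2def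
    set w2' : Fin 2 → ℝ := fun i => (w2 i : ℝ) with hw2'def
    have hw2 : ∀ i, w2' i = (1 - σ) * u' i + (1 - τ) * v' i := by
      intro i
      simp only [hw2'def, hw2def]
      push_cast
      have := hw i
      simp only [hw'def] at this
      simp only [hu', hv'] at *
      linarith [this]
    have hmem : w2' ∈ ({0, u', v'} : Set (Fin 2 → ℝ)) := by
      rw [← hT]
      refine ⟨?_, fun i => ⟨w2 i, rfl⟩⟩
      have heq : w2' = (σ + τ - 1) • (0 : Fin 2 → ℝ) + (1 - σ) • u' + (1 - τ) • v' := by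
        funext i
        simp [hw2 i]
      rw [heq]
      exact combo_mem_aux (by linarith) (by linarith) (by linarith) (by ring)
    simp only [Set.mem_insert_iff, Set.mem_singleton_iff] at hmem
    rcases hmem with h0 | h0 | h0
    · have := lin_indep_aux u v hdet (1 - σ) (1 - τ) (fun i => by
        have := congrFun h0 i
        rw [hw2 i] at this
        simpa using this)
      linarith [this.1]
    · have := lin_indep_aux u v hdet (-σ) (1 - τ) (fun i => by
        have := congrFun h0 i
        rw [hw2 i] at this
        simp only [hu'] at this ⊢
        linarith [this])
      linarith [this.2]
    · have := lin_indep_aux u v hdet (1 - σ) (-τ) (fun i => by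
        have := congrFun h0 i
        rw [hw2 i] at this
        simp only [hv'] at this ⊢
        linarith [this])
      linarith [this.1]

theorem stmt_17 (u v : Fin 2 → ℤ)
    (hdim : Matrix.det !![(u 0 : ℝ), (v 0 : ℝ); (u 1 : ℝ), (v 1 : ℝ)] ≠ 0)
    (hT : convexHull ℝ ({0, (fun i => (u i : ℝ)), (fun i => (v i : ℝ))} : Set (Fin 2 → ℝ)) ∩
        {x : Fin 2 → ℝ | ∀ i, ∃ m : ℤ, x i = (m : ℝ)}
        = {0, (fun i => (u i : ℝ)), (fun i => (v i : ℝ))}) :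
    (Matrix.det !![u 0, v 0; u 1, v 1]).natAbs = 1 := by
  rw [Matrix.det_fin_two_of]
  rw [Matrix.det_fin_two_of] at hdim
  rw [show u 0 * v 1 - v 0 * u 1 = u 0 * v 1 - u 1 * v 0 from by ring]
  have hDr : (u 0 : ℝ) * v 1 - (u 1 : ℝ) * v 0 ≠ 0 := by
    intro h; exact hdim (by linarith)
  have hDint : (u 0 * v 1 - u 1 * v 0 : ℤ) ≠ 0 := by
    intro h
    apply hDr
    exact_mod_cast congrArg (fun n : ℤ => (n : ℝ)) h
  by_contra hne
  set Dr : ℝ := (u 0 : ℝ) * v 1 - (u 1 : ℝ) * v 0 with hDrdef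
  -- solve for e1 = (1,0) and e2 = (0,1)
  have hz1 : ∀ i, ((v 1 : ℝ) / Dr) * (u i : ℝ) + (-(u 1 : ℝ) / Dr) * (v i : ℝ)
      = ((![1, 0] : Fin 2 → ℤ) i : ℝ) := by
    intro i
    have hD' : (v 1 : ℝ) * u 0 - u 1 * v 0 ≠ 0 := by rw [mul_comm (v 1 : ℝ)]; exact hDr
    fin_cases i <;> · simp only [hDrdef] at hDr ⊢; simp; field_simp; ring
  have hz2 : ∀ i, ((-(v 0 : ℝ)) / Dr) * (u i : ℝ) + ((u 0 : ℝ) / Dr) * (v i : ℝ)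
      = ((![0, 1] : Fin 2 → ℤ) i : ℝ) := by
    intro i
    fin_cases i <;> · simp only [hDrdef] at hDr ⊢; simp; field_simp; ring
  by_cases h1 : (∃ a : ℤ, (v 1 : ℝ) / Dr = (a : ℝ)) ∧ (∃ b : ℤ, (-(u 1 : ℝ)) / Dr = (b : ℝ))
  · by_cases h2 : (∃ c : ℤ, (-(v 0 : ℝ)) / Dr = (c : ℝ)) ∧ (∃ d : ℤ, (u 0 : ℝ) / Dr = (d : ℝ))
    · obtain ⟨⟨a, ha⟩, ⟨b, hb⟩⟩ := h1
      obtain ⟨⟨c, hc⟩, ⟨d, hd⟩⟩ := h2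
      rw [div_eq_iff hDr] at ha hb hc hd
      rw [hDrdef] at ha hb hc hd
      have hv1 : v 1 = a * (u 0 * v 1 - u 1 * v 0) := by exact_mod_cast ha
      have hu1 : -(u 1) = b * (u 0 * v 1 - u 1 * v 0) := by exact_mod_cast hb
      have hv0 : -(v 0) = c * (u 0 * v 1 - u 1 * v 0) := by exact_mod_cast hc
      have hu0 : u 0 = d * (u 0 * v 1 - u 1 * v 0) := by exact_mod_cast hd
      set D : ℤ := u 0 * v 1 - u 1 * v 0 with hDdef
      have hkey : D * 1 = D * (D * (a * d - b * c)) := by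
        linear_combination hDdef + (u 0 : ℤ) * hv1 + a * D * hu0 + (v 0 : ℤ) * hu1 - b * D * hv0
      have h1 : D * (a * d - b * c) = 1 := (mul_left_cancel₀ hDint hkey).symm
      have : D.natAbs * (a * d - b * c).natAbs = 1 := by
        rw [← Int.natAbs_mul, h1]
        rfl
      exact hne (Nat.eq_one_of_mul_eq_one_right (by rwa [Nat.mul_comm] at this))
    · exact key_aux u v hDr hT ![0, 1] _ _ hz2 h2
  · exact key_aux u v hDr hT ![1, 0] _ _ hz1 h1
end
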